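/- Let P be a locally finite poset and k a field of characteristic 0. For f ∈ C^p(P;k) and g ∈ C^q(P;k) (p, q ≥ 1), the map Φ intertwines cup products: Φ(f ⌣ g) = (Φf) ⌣ (Φg) as k-multilinear maps (kP)^{p+q} → kP, where f ⌣ g is the simplicial cup product and (Φf) ⌣ (Φg) is the Hochschild cup product. -/

import Mathlib

/-!
STATEMENT 6: `Φ` intertwines cup products: `Φ(f ⌣ g) = (Φf) ⌣ (Φg)` for
`f ∈ C^p(P;k)`, `g ∈ C^q(P;k)` (`p, q ≥ 1`).
-/

open Finset

/-- The Hochschild cup product: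
`(F ⌣ G)(a_1, …, a_{p+q}) = F(a_1, …, a_p) * G(a_{p+1}, …, a_{p+q})`. -/
def hCup {A : Type*} [Mul A] (p q : ℕ) (F : (Fin p → A) → A) (G : (Fin q → A) → A) :
    (Fin (p + q) → A) → A :=
  fun a => F (fun t => a ⟨t, by omega⟩) * G (fun s => a ⟨p + (s : ℕ), by omega⟩)

section Incidence
variable (k : Type*) [Field k] (P : Type*) [PartialOrder P] [LocallyFiniteOrder P]
  [DecidableEq P]

/-- A chain (simplex) of length `n` in the poset `P`: a monotone `(n+1)`-tuple. -/
abbrev SChain (n : ℕ) := {c : Fin (n + 1) → P // Monotone c}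

open scoped Classical in
/-- The finset of monotone `(n+1)`-tuples from `x` to `y`. -/
noncomputable def chainTuples (n : ℕ) (x y : P) : Finset (Fin (n + 1) → P) :=
  (Fintype.piFinset fun _ => Finset.Icc x y).filter fun c =>
    Monotone c ∧ c 0 = x ∧ c (Fin.last n) = y

lemma chainTuples_mono {n : ℕ} {x y : P} {c : Fin (n + 1) → P}
    (hc : c ∈ chainTuples P n x y) : Monotone c := by
  classical
  simp only [chainTuples, Finset.mem_filter] at hc
  exact hc.2.1

lemma le_of_mem_chainTuples {n : ℕ} {x y : P} {c : Fin (n + 1) → P}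
    (hc : c ∈ chainTuples P n x y) : x ≤ y := by
  classical
  simp only [chainTuples, Finset.mem_filter] at hc
  exact hc.2.2.1 ▸ hc.2.2.2 ▸ hc.2.1 (Fin.zero_le _)

/-- The map `Φ` from simplicial `n`-cochains on `P` to Hochschild `n`-cochains of `kP`:
`(Φf)(a_1, …, a_n)(x, y) = ∑_{x = i₀ ≤ ⋯ ≤ iₙ = y} f(i₀, …, iₙ)·a_1(i₀,i₁)⋯aₙ(i_{n-1},iₙ)`. -/
noncomputable def Phi (n : ℕ) (f : SChain P n → k) (a : Fin n → IncidenceAlgebra k P) :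
    IncidenceAlgebra k P :=
  ⟨fun x y => ∑ c ∈ (chainTuples P n x y).attach,
      f ⟨c.1, chainTuples_mono P c.2⟩ * ∏ t : Fin n, a t (c.1 t.castSucc) (c.1 t.succ),
   fun x y hxy => by
    try dsimp only
    exact Finset.sum_eq_zero fun c _ => absurd (le_of_mem_chainTuples P c.2) hxy⟩

end Incidence

section Simplicial
variable (k : Type*) [Field k] (P : Type*) [PartialOrder P]

/-- The simplicial cup product:
`(f ⌣ g)(i_0, …, i_{p+q}) = f(i_0, …, i_p) ⬝ g(i_p, …, i_{p+q})`. -/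
def sCup (p q : ℕ) (f : SChain P p → k) (g : SChain P q → k) : SChain P (p + q) → k :=
  fun c =>
    f ⟨fun t => c.1 ⟨t, by omega⟩,
       c.2.comp (by
         intro s t hst
         have hst' : (s : ℕ) ≤ (t : ℕ) := hst
         simp only [Fin.mk_le_mk]
         omega)⟩ *
    g ⟨fun s => c.1 ⟨p + (s : ℕ), by omega⟩,
       c.2.comp (by
         intro s t hst
         have hst' : (s : ℕ) ≤ (t : ℕ) := hst
         simp only [Fin.mk_le_mk]
         omega)⟩

end Simplicial

section Aux
open Finset
variable (k : Type*) [Field k] (P : Type*) [PartialOrder P] [LocallyFiniteOrder P]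
  [DecidableEq P]

lemma mem_chainTuples_iff {n : ℕ} {x y : P} {c : Fin (n+1) → P} :
    c ∈ chainTuples P n x y ↔ Monotone c ∧ c 0 = x ∧ c (Fin.last n) = y := by
  classical
  simp only [chainTuples, mem_filter, Fintype.mem_piFinset, mem_Icc, and_iff_right_iff_imp]
  rintro ⟨hm, h0, hl⟩ i
  exact ⟨h0 ▸ hm (Fin.zero_le i), hl ▸ hm (Fin.le_last i)⟩

open scoped Classical in
noncomputable def Gt (n : ℕ) (f : SChain P n → k) (a : Fin n → IncidenceAlgebra k P)
    (c : Fin (n+1) → P) : k :=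
  if h : Monotone c then f ⟨c, h⟩ * ∏ t : Fin n, a t (c t.castSucc) (c t.succ) else 0

lemma Phi_apply (n : ℕ) (f : SChain P n → k) (a : Fin n → IncidenceAlgebra k P) (x y : P) :
    Phi k P n f a x y = ∑ c ∈ chainTuples P n x y, Gt k P n f a c := by
  classical
  have h0 : Phi k P n f a x y = ∑ c ∈ (chainTuples P n x y).attach,
      f ⟨c.1, chainTuples_mono P c.2⟩ * ∏ t : Fin n, a t (c.1 t.castSucc) (c.1 t.succ) := rfl
  rw [h0, ← Finset.sum_attach (chainTuples P n x y) (Gt k P n f a)]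
  exact Finset.sum_congr rfl fun c _ => by rw [Gt, dif_pos (chainTuples_mono P c.2)]

end Aux

theorem phi_intertwines_cup_products
    (k : Type*) [Field k] [CharZero k]
    (P : Type*) [PartialOrder P] [LocallyFiniteOrder P] [DecidableEq P]
    (p q : ℕ) (hp : 1 ≤ p) (hq : 1 ≤ q)
    (f : SChain P p → k) (g : SChain P q → k) :
    Phi k P (p + q) (sCup k P p q f g) = hCup p q (Phi k P p f) (Phi k P q g) := by
  classical
  funext a
  ext x y hxy
  simp only [hCup, IncidenceAlgebra.mul_apply, Phi_apply]
  set a1 : Fin p → IncidenceAlgebra k P := fun t => a ⟨t, by omega⟩ with ha1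
  set a2 : Fin q → IncidenceAlgebra k P := fun s => a ⟨p + (s : ℕ), by omega⟩ with ha2
  have hrw : ∀ j : P, (∑ c1 ∈ chainTuples P p x j, Gt k P p f a1 c1) *
      (∑ c2 ∈ chainTuples P q j y, Gt k P q g a2 c2)
      = ∑ z ∈ (chainTuples P p x j) ×ˢ (chainTuples P q j y),
          Gt k P p f a1 z.1 * Gt k P q g a2 z.2 := by
    intro j
    rw [Finset.sum_mul_sum, ← Finset.sum_product']
  rw [Finset.sum_congr rfl fun j _ => hrw j, Finset.sum_sigma']
  refine Finset.sum_nbij'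
    (i := fun c => ⟨c ⟨p, by omega⟩,
      ((fun t : Fin (p+1) => c ⟨t, by omega⟩), (fun s : Fin (q+1) => c ⟨p + (s : ℕ), by omega⟩))⟩)
    (j := fun z => fun t : Fin (p+q+1) =>
      if h : (t : ℕ) ≤ p then z.2.1 ⟨t, by omega⟩
      else z.2.2 ⟨(t : ℕ) - p, by have := t.isLt; omega⟩)
    ?_ ?_ ?_ ?_ ?_
  · -- hi : membership in the sigma finset
    intro c hc
    obtain ⟨hm, h0, hl⟩ := (mem_chainTuples_iff P).1 hc
    have hx : x ≤ c ⟨p, by omega⟩ := h0 ▸ hm (Fin.zero_le _)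
    have hy : c ⟨p, by omega⟩ ≤ y := hl ▸ hm
      (by simp only [Fin.le_def, Fin.val_last, Fin.val_mk]; omega)
    refine Finset.mem_sigma.2 ⟨Finset.mem_Icc.2 ⟨hx, hy⟩, Finset.mem_product.2 ⟨?_, ?_⟩⟩
    · refine (mem_chainTuples_iff P).2 ⟨?_, ?_, rfl⟩
      · intro s t hst
        refine hm ?_
        simp only [Fin.le_def, Fin.val_mk]
        exact hst
      · show c ⟨((0 : Fin (p+1)) : ℕ), by omega⟩ = x
        have e : (⟨((0 : Fin (p+1)) : ℕ), by omega⟩ : Fin (p+q+1)) = 0 := by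
          simp only [Fin.ext_iff, Fin.val_zero, Fin.val_mk]
        rw [e, h0]
    · refine (mem_chainTuples_iff P).2 ⟨?_, ?_, ?_⟩
      · intro s t hst
        refine hm ?_
        simp only [Fin.le_def, Fin.val_mk]
        have : (s : ℕ) ≤ t := hst
        omega
      · rfl
      · show c ⟨p + ((Fin.last q : Fin (q+1)) : ℕ), by omega⟩ = y
        have e : (⟨p + ((Fin.last q : Fin (q+1)) : ℕ), by omega⟩ : Fin (p+q+1))
            = Fin.last (p+q) := by
          simp only [Fin.ext_iff, Fin.val_last, Fin.val_mk]
        rw [e, hl]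
  · -- hj : glue is a chain tuple
    rintro ⟨j, c1, c2⟩ hz
    simp only [Finset.mem_sigma, Finset.mem_product] at hz
    obtain ⟨hj, h1, h2⟩ := hz
    obtain ⟨hm1, h10, h1l⟩ := (mem_chainTuples_iff P).1 h1
    obtain ⟨hm2, h20, h2l⟩ := (mem_chainTuples_iff P).1 h2
    dsimp only
    refine (mem_chainTuples_iff P).2 ⟨?_, ?_, ?_⟩
    · intro s t hst
      have hst' : (s : ℕ) ≤ t := hst
      dsimp only
      by_cases hs : (s : ℕ) ≤ p
      · by_cases ht : (t : ℕ) ≤ p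
        · rw [dif_pos hs, dif_pos ht]
          refine hm1 ?_
          simp only [Fin.le_def, Fin.val_mk]
          exact hst'
        · rw [dif_pos hs, dif_neg ht]
          calc c1 ⟨s, by omega⟩ ≤ c1 (Fin.last p) := hm1
                (by simp only [Fin.le_def, Fin.val_last, Fin.val_mk]; omega)
            _ = j := h1l
            _ = c2 0 := h20.symm
            _ ≤ c2 ⟨(t : ℕ) - p, by have := t.isLt; omega⟩ := hm2 (Fin.zero_le _)
      · have ht : ¬ (t : ℕ) ≤ p := by omega
        rw [dif_neg hs, dif_neg ht]
        refine hm2 ?_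
        simp only [Fin.le_def, Fin.val_mk]
        omega
    · have h : ((0 : Fin (p+q+1)) : ℕ) ≤ p := by simp
      rw [dif_pos h]
      have e : (⟨((0 : Fin (p+q+1)) : ℕ), by omega⟩ : Fin (p+1)) = 0 := rfl
      rw [e, h10]
    · have h : ¬ ((Fin.last (p+q) : Fin (p+q+1)) : ℕ) ≤ p := by
        simp only [Fin.val_last]; omega
      rw [dif_neg h]
      have e : (⟨((Fin.last (p+q) : Fin (p+q+1)) : ℕ) - p, by
            simp only [Fin.val_last]; omega⟩ : Fin (q+1)) = Fin.last q := by
        simp only [Fin.ext_iff, Fin.val_last, Fin.val_mk]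
        omega
      rw [e, h2l]
  · -- left_inv
    intro c hc
    funext t
    dsimp only
    by_cases h : (t : ℕ) ≤ p
    · rw [dif_pos h]
    · rw [dif_neg h]
      refine congrArg c (Fin.ext ?_)
      simp only [Fin.val_mk]
      have := t.isLt
      omega
  · -- right_inv
    rintro ⟨j, c1, c2⟩ hz
    simp only [Finset.mem_sigma, Finset.mem_product] at hz
    obtain ⟨hj, h1, h2⟩ := hz
    obtain ⟨hm1, h10, h1l⟩ := (mem_chainTuples_iff P).1 h1
    obtain ⟨hm2, h20, h2l⟩ := (mem_chainTuples_iff P).1 h2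
    dsimp only
    have hpp : ((⟨p, by omega⟩ : Fin (p+q+1)) : ℕ) ≤ p := le_refl p
    refine Sigma.ext ?_ (heq_of_eq ?_)
    · dsimp only
      rw [dif_pos hpp]
      have e : (⟨((⟨p, by omega⟩ : Fin (p+q+1)) : ℕ), by omega⟩ : Fin (p+1)) = Fin.last p := by
        simp only [Fin.ext_iff, Fin.val_last, Fin.val_mk]
      rw [e, h1l]
    · dsimp only
      refine Prod.ext ?_ ?_
      · funext t
        dsimp only
        have h : ((⟨(t : ℕ), by have := t.isLt; omega⟩ : Fin (p+q+1)) : ℕ) ≤ p := by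
          have := t.isLt
          simp only [Fin.val_mk]
          omega
        rw [dif_pos h]
      · funext s
        dsimp only
        by_cases h : ((⟨p + (s : ℕ), by have := s.isLt; omega⟩ : Fin (p+q+1)) : ℕ) ≤ p
        · have hs0 : (s : ℕ) = 0 := by simpa using h
          rw [dif_pos h]
          have e1 : (⟨((⟨p + (s : ℕ), by have := s.isLt; omega⟩ : Fin (p+q+1)) : ℕ), by
                have := s.isLt; simp only [Fin.val_mk]; omega⟩
              : Fin (p+1)) = Fin.last p := by
            simp only [Fin.ext_iff, Fin.val_last, Fin.val_mk]
            omega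
          rw [e1, h1l, ← h20]
          refine congrArg c2 (Fin.ext ?_)
          simp only [Fin.val_zero]
          omega
        · rw [dif_neg h]
          refine congrArg c2 (Fin.ext ?_)
          simp only [Fin.val_mk]
          omega
  · -- value equality
    intro c hc
    obtain ⟨hm, h0, hl⟩ := (mem_chainTuples_iff P).1 hc
    dsimp only
    have hm1 : Monotone (fun t : Fin (p+1) => c ⟨t, by omega⟩) := by
      intro s t hst
      refine hm ?_
      simp only [Fin.le_def, Fin.val_mk]
      exact hst
    have hm2 : Monotone (fun s : Fin (q+1) => c ⟨p + (s : ℕ), by omega⟩) := by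
      intro s t hst
      refine hm ?_
      simp only [Fin.le_def, Fin.val_mk]
      have : (s : ℕ) ≤ t := hst
      omega
    rw [Gt, Gt, Gt, dif_pos hm, dif_pos hm1, dif_pos hm2]
    have hs : sCup k P p q f g ⟨c, hm⟩
        = f ⟨fun t : Fin (p+1) => c ⟨t, by omega⟩, hm1⟩
          * g ⟨fun s : Fin (q+1) => c ⟨p + (s : ℕ), by omega⟩, hm2⟩ := rfl
    rw [hs, Fin.prod_univ_add]
    have e1 : (∏ t : Fin p, a (Fin.castAdd q t) (c (Fin.castAdd q t).castSucc)
          (c (Fin.castAdd q t).succ))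
        = ∏ t : Fin p, a1 t
            ((fun t : Fin (p+1) => c ⟨t, by omega⟩) t.castSucc)
            ((fun t : Fin (p+1) => c ⟨t, by omega⟩) t.succ) := rfl
    have e2 : (∏ s : Fin q, a (Fin.natAdd p s) (c (Fin.natAdd p s).castSucc)
          (c (Fin.natAdd p s).succ))
        = ∏ s : Fin q, a2 s
            ((fun s : Fin (q+1) => c ⟨p + (s : ℕ), by omega⟩) s.castSucc)
            ((fun s : Fin (q+1) => c ⟨p + (s : ℕ), by omega⟩) s.succ) := rfl
    rw [e1, e2]
    ring
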